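/- Two functions f, g : Σ* → ℕ∞ satisfy f ≈ g (i.e., there exists a correction function α with f ≈_α g) if and only if for every subset A ⊆ Σ*, f is bounded on A iff g is bounded on A. -/
import Mathlib


/-- `f ≈ g`: there is a correction function `α` with `f ≈_α g`. -/
def CostEquiv {Sig : Type} (f g : List Sig → ℕ∞) : Prop :=
  ∃ α : ℕ∞ → ℕ∞, Monotone α ∧ (∀ x, α x = ⊤ ↔ x = ⊤) ∧
    ∀ w, f w ≤ α (g w) ∧ g w ≤ α (f w)

/-- `f ≈ g` iff for every set `A` of words, `f` is bounded on `A`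
iff `g` is bounded on `A`. -/
theorem costEquiv_iff_bounded_sets
    (Sig : Type) (f g : List Sig → ℕ∞) :
    CostEquiv f g ↔
      ∀ A : Set (List Sig), ((⨆ a ∈ A, f a) < ⊤ ↔ (⨆ a ∈ A, g a) < ⊤) := by
  constructor
  · rintro ⟨α, hmono, htop, hle⟩ A
    constructor
    · intro h
      have : (⨆ a ∈ A, g a) ≤ α (⨆ a ∈ A, f a) :=
        iSup₂_le fun a ha => (hle a).2.trans (hmono (le_iSup₂ (f := fun a _ => f a) a ha))
      refine lt_of_le_of_lt this ?_
      exact lt_top_iff_ne_top.2 (fun hT => h.ne ((htop _).1 hT))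
    · intro h
      have : (⨆ a ∈ A, f a) ≤ α (⨆ a ∈ A, g a) :=
        iSup₂_le fun a ha => (hle a).1.trans (hmono (le_iSup₂ (f := fun a _ => g a) a ha))
      refine lt_of_le_of_lt this ?_
      exact lt_top_iff_ne_top.2 (fun hT => h.ne ((htop _).1 hT))
  · intro h
    refine ⟨fun n => n ⊔ (⨆ w ∈ {w | f w ≤ n}, g w) ⊔ (⨆ w ∈ {w | g w ≤ n}, f w),
      ?_, ?_, ?_⟩
    · intro n m hnm
      refine sup_le_sup (sup_le_sup hnm ?_) ?_
      · exact iSup_le_iSup_of_subset fun w hw => le_trans hw hnm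
      · exact iSup_le_iSup_of_subset fun w hw => le_trans hw hnm
    · intro n
      constructor
      · intro hT
        by_contra hn
        have h1 : n < ⊤ := lt_top_iff_ne_top.2 hn
        have h2 : (⨆ w ∈ {w | f w ≤ n}, g w) < ⊤ := by
          refine (h {w | f w ≤ n}).1 ?_
          exact lt_of_le_of_lt (iSup₂_le fun w hw => hw) h1
        have h3 : (⨆ w ∈ {w | g w ≤ n}, f w) < ⊤ := by
          refine (h {w | g w ≤ n}).2 ?_
          exact lt_of_le_of_lt (iSup₂_le fun w hw => hw) h1
        have : n ⊔ (⨆ w ∈ {w | f w ≤ n}, g w) ⊔ (⨆ w ∈ {w | g w ≤ n}, f w) < ⊤ :=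
          sup_lt_iff.2 ⟨sup_lt_iff.2 ⟨h1, h2⟩, h3⟩
        exact this.ne hT
      · rintro rfl
        exact top_le_iff.1 (le_sup_of_le_left (le_sup_of_le_left le_rfl))
    · intro w
      constructor
      · exact le_sup_of_le_right (le_iSup₂ (f := fun w' _ => f w') w (le_refl (g w)))
      · exact le_sup_of_le_left (le_sup_of_le_right
          (le_iSup₂ (f := fun w' _ => g w') w (le_refl (f w))))
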